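/- The function u(x) = (1/16)·₂F₁(3/2,3/2;3;x)·(1-x) + (1/2)·₂F₁(1/2,1/2;2;x) is strictly increasing on [0,1), with u(0) = 9/16 and limit 2/π as x → 1⁻. -/

import Mathlib

open Real Set Filter

noncomputable def poch (a : ℝ) (n : ℕ) : ℝ := ∏ i ∈ Finset.range n, (a + i)

noncomputable def F (a b c x : ℝ) : ℝ :=
  ∑' n : ℕ, poch a n * poch b n / (poch c n * n.factorial) * x ^ n

noncomputable def u (x : ℝ) : ℝ :=
  (1/16) * F (3/2) (3/2) 3 x * (1 - x) + (1/2) * F (1/2) (1/2) 2 x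

open scoped Topology

lemma poch_zero (a : ℝ) : poch a 0 = 1 := Finset.prod_range_zero _

lemma poch_succ (a : ℝ) (n : ℕ) : poch a (n+1) = poch a n * (a + n) :=
  Finset.prod_range_succ _ _

lemma poch_half_pos (n : ℕ) : 0 < poch (1/2) n := by
  induction n with
  | zero => simp [poch_zero]
  | succ n ih => rw [poch_succ]; positivity

/-- `bb n = (poch(1/2,n)/n!)^2`. -/
noncomputable def bb (n : ℕ) : ℝ := (poch (1/2) n / n.factorial)^2

lemma bb_zero : bb 0 = 1 := by simp [bb, poch_zero]

lemma bb_succ (n : ℕ) : bb (n+1) = bb n * (((n:ℝ)+1/2)/((n:ℝ)+1))^2 := by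
  have h1 : ((n:ℝ)+1) ≠ 0 := by positivity
  have h2 : ((n.factorial : ℝ)) ≠ 0 := by exact_mod_cast n.factorial_ne_zero
  unfold bb
  rw [poch_succ, Nat.factorial_succ]
  push_cast
  field_simp
  ring

lemma bb_pos (n : ℕ) : 0 < bb n := by
  have := poch_half_pos n
  have h2 : (0:ℝ) < n.factorial := by exact_mod_cast n.factorial_pos
  unfold bb; positivity

lemma bb_le_one (n : ℕ) : bb n ≤ 1 := by
  induction n with
  | zero => rw [bb_zero]
  | succ n ih =>
    rw [bb_succ]
    have h1 : (((n:ℝ)+1/2)/((n:ℝ)+1))^2 ≤ 1 := by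
      have : ((n:ℝ)+1/2)/((n:ℝ)+1) ≤ 1 := by
        rw [div_le_one (by positivity)]; linarith
      have h0 : 0 ≤ ((n:ℝ)+1/2)/((n:ℝ)+1) := by positivity
      nlinarith
    nlinarith [bb_pos n]

lemma poch_three_half (n : ℕ) : poch (3/2) n = poch (1/2) n * (2*n+1) := by
  induction n with
  | zero => simp [poch_zero]
  | succ n ih => rw [poch_succ, poch_succ, ih]; push_cast; ring

lemma poch_two (n : ℕ) : poch 2 n = ((n:ℝ)+1) * n.factorial := by
  induction n with
  | zero => simp [poch_zero]
  | succ n ih => rw [poch_succ, ih, Nat.factorial_succ]; push_cast; ring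

lemma poch_three (n : ℕ) : poch 3 n = ((n:ℝ)+1) * ((n:ℝ)+2) * n.factorial / 2 := by
  induction n with
  | zero => simp [poch_zero]
  | succ n ih => rw [poch_succ, ih, Nat.factorial_succ]; push_cast; ring

/-- coefficients of the three series -/
noncomputable def tA (n : ℕ) : ℝ := poch (3/2) n * poch (3/2) n / (poch 3 n * n.factorial)
noncomputable def tB (n : ℕ) : ℝ := poch (1/2) n * poch (1/2) n / (poch 2 n * n.factorial)
noncomputable def tC (n : ℕ) : ℝ := poch (1/2) n * poch (1/2) n / (poch 3 n * n.factorial)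

lemma tA_eq (n : ℕ) : tA n = 2*(2*(n:ℝ)+1)^2 * bb n / (((n:ℝ)+1)*((n:ℝ)+2)) := by
  have h2 : ((n.factorial : ℝ)) ≠ 0 := by exact_mod_cast n.factorial_ne_zero
  have h3 : ((n:ℝ)+1) ≠ 0 := by positivity
  have h4 : ((n:ℝ)+2) ≠ 0 := by positivity
  unfold tA bb
  rw [poch_three_half, poch_three]
  field_simp

lemma tB_eq (n : ℕ) : tB n = bb n / ((n:ℝ)+1) := by
  have h2 : ((n.factorial : ℝ)) ≠ 0 := by exact_mod_cast n.factorial_ne_zero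
  have h3 : ((n:ℝ)+1) ≠ 0 := by positivity
  unfold tB bb
  rw [poch_two]
  field_simp

lemma tC_eq (n : ℕ) : tC n = 2 * bb n / (((n:ℝ)+1)*((n:ℝ)+2)) := by
  have h2 : ((n.factorial : ℝ)) ≠ 0 := by exact_mod_cast n.factorial_ne_zero
  have h3 : ((n:ℝ)+1) ≠ 0 := by positivity
  have h4 : ((n:ℝ)+2) ≠ 0 := by positivity
  unfold tC bb
  rw [poch_three]
  field_simp

lemma tA_nonneg (n : ℕ) : 0 ≤ tA n := by rw [tA_eq]; have := bb_pos n; positivity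
lemma tB_nonneg (n : ℕ) : 0 ≤ tB n := by rw [tB_eq]; have := bb_pos n; positivity
lemma tC_nonneg (n : ℕ) : 0 ≤ tC n := by rw [tC_eq]; have := bb_pos n; positivity
lemma tC_pos (n : ℕ) : 0 < tC n := by rw [tC_eq]; have := bb_pos n; positivity

lemma tA_le (n : ℕ) : tA n ≤ 8 := by
  rw [tA_eq]
  have hb1 := bb_le_one n; have hb0 := (bb_pos n).le
  rw [div_le_iff₀ (by positivity)]
  have h : (0:ℝ) ≤ (n:ℝ) := n.cast_nonneg
  nlinarith

lemma tB_le (n : ℕ) : tB n ≤ 1 := by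
  rw [tB_eq]
  have hb1 := bb_le_one n; have hb0 := (bb_pos n).le
  rw [div_le_one (by positivity)]
  have h : (0:ℝ) ≤ (n:ℝ) := n.cast_nonneg
  linarith

lemma tC_le (n : ℕ) : tC n ≤ 2 := by
  rw [tC_eq]
  have hb1 := bb_le_one n; have hb0 := (bb_pos n).le
  rw [div_le_iff₀ (by positivity)]
  have h : (0:ℝ) ≤ (n:ℝ) := n.cast_nonneg
  nlinarith

lemma summable_aux {f : ℕ → ℝ} {C x : ℝ} (h0 : ∀ n, 0 ≤ f n) (hC : ∀ n, f n ≤ C)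
    (hx0 : 0 ≤ x) (hx1 : x < 1) : Summable (fun n => f n * x^n) := by
  refine Summable.of_nonneg_of_le (fun n => mul_nonneg (h0 n) (pow_nonneg hx0 n))
    (fun n => mul_le_mul_of_nonneg_right (hC n) (pow_nonneg hx0 n)) ?_
  exact (summable_geometric_of_lt_one hx0 hx1).mul_left C

lemma idkey (n : ℕ) : 1/16 * tA (n+1) + 1/2 * tB (n+1) = 9/16 * tC (n+1) + 1/16 * tA n := by
  have h1 : ((n:ℝ)+1) ≠ 0 := by positivity
  have h2 : ((n:ℝ)+2) ≠ 0 := by positivity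
  have h3 : ((n:ℝ)+3) ≠ 0 := by positivity
  rw [tA_eq, tB_eq, tC_eq, tA_eq, bb_succ]
  push_cast
  field_simp
  ring

lemma S_eq (N : ℕ) : ∑ n ∈ Finset.range N, tC n = bb N * (8*(N:ℝ)*(4*(N:ℝ)+5)) / (9*((N:ℝ)+1)) := by
  induction N with
  | zero => simp
  | succ N ih =>
    have h1 : ((N:ℝ)+1) ≠ 0 := by positivity
    have h2 : ((N:ℝ)+2) ≠ 0 := by positivity
    rw [Finset.sum_range_succ, ih, tC_eq, bb_succ]
    push_cast
    field_simp
    ring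

lemma bbW (N : ℕ) : bb N * (2*(N:ℝ)+1) * Real.Wallis.W N = 1 := by
  induction N with
  | zero => simp [bb_zero, Real.Wallis.W]
  | succ N ih =>
    have h1 : ((N:ℝ)+1) ≠ 0 := by positivity
    have h3 : (2*(N:ℝ)+1) ≠ 0 := by positivity
    have h4 : (2*(N:ℝ)+3) ≠ 0 := by positivity
    rw [bb_succ, Real.Wallis.W_succ]
    push_cast
    field_simp
    linear_combination (2*(N:ℝ)+3) * ih

lemma W_tendsto : Tendsto Real.Wallis.W atTop (𝓝 (π/2)) :=
  Real.Wallis.tendsto_W_nhds_pi_div_two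

lemma hasSum_tC : HasSum tC (32/(9*π)) := by
  rw [hasSum_iff_tendsto_nat_of_nonneg tC_nonneg]
  have hW : Tendsto (fun N => (Real.Wallis.W N)⁻¹) atTop (𝓝 (2/π)) := by
    have := W_tendsto.inv₀ (by positivity : (π:ℝ)/2 ≠ 0)
    simpa [inv_div] using this
  have hinv : Tendsto (fun N : ℕ => (1:ℝ)/(N:ℝ)) atTop (𝓝 0) :=
    tendsto_one_div_atTop_nhds_zero_nat
  have hr : Tendsto (fun N : ℕ => (8*(4+5*(1/(N:ℝ))))/(9*(1+1/(N:ℝ))*(2+1/(N:ℝ))))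
      atTop (𝓝 (16/9)) := by
    have h18 : ((9:ℝ)*(1+0)*(2+0)) ≠ 0 := by norm_num
    have := (((hinv.const_mul 5).const_add 4).const_mul 8).div
      ((((hinv.const_add 1).const_mul 9).mul (hinv.const_add 2))) h18
    norm_num at this ⊢
    convert this using 2 <;> norm_num
  have hmain : Tendsto (fun N : ℕ => (Real.Wallis.W N)⁻¹ *
      ((8*(4+5*(1/(N:ℝ))))/(9*(1+1/(N:ℝ))*(2+1/(N:ℝ))))) atTop (𝓝 ((2/π)*(16/9))) :=
    hW.mul hr
  have heq : ∀ᶠ N : ℕ in atTop, (Real.Wallis.W N)⁻¹ *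
      ((8*(4+5*(1/(N:ℝ))))/(9*(1+1/(N:ℝ))*(2+1/(N:ℝ)))) = ∑ n ∈ Finset.range N, tC n := by
    filter_upwards [eventually_ge_atTop 1] with N hN
    have hN0 : ((N:ℝ)) ≠ 0 := by
      have : (1:ℝ) ≤ (N:ℝ) := by exact_mod_cast hN
      linarith
    have h1 : ((N:ℝ)+1) ≠ 0 := by positivity
    have h2 : (2*(N:ℝ)+1) ≠ 0 := by positivity
    have hWne : Real.Wallis.W N ≠ 0 := ne_of_gt (Real.Wallis.W_pos N)
    have hbb : bb N * (2*(N:ℝ)+1) = (Real.Wallis.W N)⁻¹ := by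
      field_simp
      linarith [bbW N]
    rw [S_eq, ← hbb]
    field_simp
  have : Tendsto (fun N : ℕ => ∑ n ∈ Finset.range N, tC n) atTop (𝓝 ((2/π)*(16/9))) :=
    hmain.congr' heq
  convert this using 2
  have : (π:ℝ) ≠ 0 := Real.pi_ne_zero
  field_simp
  ring

lemma tA0 : tA 0 = 1 := by simp [tA, poch_zero]
lemma tB0 : tB 0 = 1 := by simp [tB, poch_zero]
lemma tC0 : tC 0 = 1 := by simp [tC, poch_zero]

lemma key {x : ℝ} (hx0 : 0 ≤ x) (hx1 : x < 1) : u x = (9/16) * ∑' n, tC n * x^n := by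
  have SA : Summable (fun n => tA n * x^n) := summable_aux tA_nonneg tA_le hx0 hx1
  have SB : Summable (fun n => tB n * x^n) := summable_aux tB_nonneg tB_le hx0 hx1
  have SC : Summable (fun n => tC n * x^n) := summable_aux tC_nonneg tC_le hx0 hx1
  have SA' : Summable (fun n => tA n * x^(n+1)) := by
    have := SA.mul_right x
    refine this.congr (fun n => ?_)
    ring
  have SC' : Summable (fun n => tC (n+1) * x^(n+1)) := by
    have := SC.comp_injective (add_left_injective 1)
    exact this
  have SA2 : Summable (fun n => tA (n+1) * x^(n+1)) := SA.comp_injective (add_left_injective 1)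
  have SB2 : Summable (fun n => tB (n+1) * x^(n+1)) := SB.comp_injective (add_left_injective 1)
  have hFA : F (3/2) (3/2) 3 x = ∑' n, tA n * x^n := rfl
  have hFB : F (1/2) (1/2) 2 x = ∑' n, tB n * x^n := rfl
  -- main telescoped identity
  have main : ∑' n, (1/16 * tA n + 1/2 * tB n) * x^n
      = (∑' n, (9/16 * tC n) * x^n) + ∑' n, (1/16 * tA n) * x^(n+1) := by
    have SL : Summable (fun n => (1/16 * tA n + 1/2 * tB n) * x^n) := by
      refine Summable.congr ((SA.mul_left (1/16)).add (SB.mul_left (1/2))) (fun n => ?_)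
      ring
    have SR1 : Summable (fun n => (9/16 * tC n) * x^n) := by
      refine Summable.congr (SC.mul_left (9/16)) (fun n => ?_); ring
    rw [Summable.tsum_eq_zero_add SL, Summable.tsum_eq_zero_add SR1]
    have SR1' : Summable (fun n => (9/16 * tC (n+1)) * x^(n+1)) := by
      refine Summable.congr (SC'.mul_left (9/16)) (fun n => ?_); ring
    have SR2 : Summable (fun n => (1/16 * tA n) * x^(n+1)) := by
      refine Summable.congr (SA'.mul_left (1/16)) (fun n => ?_); ring
    rw [add_assoc, ← Summable.tsum_add SR1' SR2]
    congr 1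
    · rw [tA0, tB0, tC0]; norm_num
    · exact tsum_congr fun n => by rw [← add_mul, idkey n]
  have eA : ∑' n, (1/16 * tA n) * x^(n+1) = 1/16 * ((∑' n, tA n * x^n) * x) := by
    rw [← tsum_mul_right, ← tsum_mul_left]
    exact tsum_congr fun n => by ring
  have eL : ∑' n, (1/16 * tA n + 1/2 * tB n) * x^n
      = 1/16 * (∑' n, tA n * x^n) + 1/2 * (∑' n, tB n * x^n) := by
    rw [← tsum_mul_left, ← tsum_mul_left, ← Summable.tsum_add (SA.mul_left (1/16)) (SB.mul_left (1/2))]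
    exact tsum_congr fun n => by ring
  have eR : ∑' n, (9/16 * tC n) * x^n = 9/16 * ∑' n, tC n * x^n := by
    rw [← tsum_mul_left]; exact tsum_congr fun n => by ring
  rw [eL, eA, eR] at main
  rw [u, hFA, hFB]
  linarith [main]

theorem stmt9 :
    StrictMonoOn u (Ico 0 1) ∧ u 0 = 9/16 ∧
    Tendsto u (nhdsWithin 1 (Ico 0 1)) (nhds (2 / π)) := by
  refine ⟨?_, ?_, ?_⟩
  · intro x hx y hy hxy
    rw [key hx.1 hx.2, key hy.1 hy.2]
    have hy0 : 0 ≤ y := hy.1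
    refine mul_lt_mul_of_pos_left ?_ (by norm_num)
    refine Summable.tsum_lt_tsum (i := 1) (fun n => ?_) ?_
      (summable_aux tC_nonneg tC_le hx.1 hx.2) (summable_aux tC_nonneg tC_le hy.1 hy.2)
    · exact mul_le_mul_of_nonneg_left (pow_le_pow_left₀ hx.1 hxy.le n) (tC_nonneg n)
    · have : x^1 < y^1 := by simpa using hxy
      exact mul_lt_mul_of_pos_left this (tC_pos 1)
  · rw [key le_rfl one_pos]
    have : ∑' n, tC n * (0:ℝ)^n = 1 := by
      rw [tsum_eq_single 0 (fun n hn => by simp [zero_pow hn])]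
      simp [tC0]
    rw [this]; norm_num
  · have hts : Tendsto (fun x : ℝ => ∑' n, tC n * x^n) (𝓝[Ico 0 1] 1)
        (𝓝 (∑' n, tC n)) := by
      refine tendsto_tsum_of_dominated_convergence (bound := tC) hasSum_tC.summable
        (fun k => ?_) ?_
      · have h1 : Tendsto (fun x : ℝ => x^k) (𝓝[Ico 0 1] 1) (𝓝 1) := by
          have := (continuous_pow k).tendsto (1:ℝ)
          simpa using this.mono_left nhdsWithin_le_nhds
        simpa using h1.const_mul (tC k)
      · filter_upwards [self_mem_nhdsWithin] with x hx k
        have hx0 : 0 ≤ x := hx.1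
        have hx1 : x ≤ 1 := hx.2.le
        rw [Real.norm_eq_abs, abs_of_nonneg (mul_nonneg (tC_nonneg k) (pow_nonneg hx0 k))]
        calc tC k * x^k ≤ tC k * 1 :=
              mul_le_mul_of_nonneg_left (pow_le_one₀ hx0 hx1) (tC_nonneg k)
          _ = tC k := mul_one _
    have htsum : ∑' n, tC n = 32/(9*π) := hasSum_tC.tsum_eq
    rw [htsum] at hts
    have h2 : (9:ℝ)/16 * (32/(9*π)) = 2/π := by
      field_simp; ring
    have := hts.const_mul ((9:ℝ)/16)
    rw [h2] at this
    refine this.congr' ?_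
    filter_upwards [self_mem_nhdsWithin] with x hx
    exact (key hx.1 hx.2).symm
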